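/- Let (a_i)_{i≥1} be an increasing sequence of positive integers with (b_n + n)/a_{n+1} → 0 as n → ∞, where b_n = a_1 + ⋯ + a_n. Then a_n / b_n → 1 as n → ∞. -/

import Mathlib

open Filter

noncomputable def Phi {α : Type*} (d : α → α → ℝ) (f : α → α) (x y : α) (δ : ℝ) : ℝ :=
  liminf (fun n : ℕ =>
    (((Finset.range (n+1)).filter (fun k => d (f^[k] x) (f^[k] y) < δ)).card : ℝ) / n) atTop

noncomputable def PhiStar {α : Type*} (d : α → α → ℝ) (f : α → α) (x y : α) (δ : ℝ) : ℝ :=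
  limsup (fun n : ℕ =>
    (((Finset.range (n+1)).filter (fun k => d (f^[k] x) (f^[k] y) < δ)).card : ℝ) / n) atTop

open Classical in
noncomputable def shiftDist (x y : ℕ → Bool) : ℝ :=
  if x = y then 0 else (2:ℝ)⁻¹ ^ (sInf {j | x j ≠ y j})

def shift (x : ℕ → Bool) : ℕ → Bool := fun n => x (n+1)

noncomputable def diamX (X : Type*) [MetricSpace X] : ℝ := Metric.diam (Set.univ : Set X)

theorem stmt7 (a : ℕ → ℕ) (hpos : ∀ i, 1 ≤ i → 0 < a i)
    (hmono : ∀ i j, 1 ≤ i → i < j → a i < a j)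
    (b : ℕ → ℕ) (hb : ∀ n, b n = ∑ i ∈ Finset.Icc 1 n, a i)
    (hab : Filter.Tendsto (fun n : ℕ => ((b n + n : ℕ) : ℝ) / (a (n+1) : ℝ)) atTop (nhds 0)) :
    Filter.Tendsto (fun n : ℕ => (a n : ℝ) / (b n : ℝ)) atTop (nhds 1) := by
  -- key recursion: b (n+1) = b n + a (n+1)
  have hrec : ∀ n : ℕ, b (n+1) = b n + a (n+1) := by
    intro n
    rw [hb, hb]
    rw [← Finset.sum_Icc_succ_top (by omega : 1 ≤ n + 1)]
  have hapos : ∀ n : ℕ, 0 < a (n+1) := fun n => hpos (n+1) (by omega)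
  have hbpos : ∀ n : ℕ, 0 < b (n+1) := by
    intro n
    rw [hrec]
    have := hapos n
    omega
  -- b n / b (n+1) → 0 by squeeze
  have hsq : Filter.Tendsto (fun n : ℕ => (b n : ℝ) / (b (n+1) : ℝ)) atTop (nhds 0) := by
    apply squeeze_zero (fun n => by positivity) (g := fun n : ℕ => ((b n + n : ℕ) : ℝ) / (a (n+1) : ℝ)) _ hab
    intro n
    apply div_le_div₀ (by positivity)
    · push_cast; linarith [Nat.cast_nonneg (α := ℝ) n]
    · exact_mod_cast hapos n
    · have := hrec n
      have : a (n+1) ≤ b (n+1) := by omega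
      exact_mod_cast this
  -- a (n+1) / b (n+1) = 1 - b n / b (n+1)
  have heq : ∀ n : ℕ, (a (n+1) : ℝ) / (b (n+1) : ℝ) = 1 - (b n : ℝ) / (b (n+1) : ℝ) := by
    intro n
    have hbne : (b (n+1) : ℝ) ≠ 0 := by exact_mod_cast (hbpos n).ne'
    have : (a (n+1) : ℝ) = (b (n+1) : ℝ) - (b n : ℝ) := by
      have := hrec n; push_cast [this]; ring
    rw [this]
    field_simp
  have : Filter.Tendsto (fun n : ℕ => (a (n+1) : ℝ) / (b (n+1) : ℝ)) atTop (nhds 1) := by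
    simp only [heq]
    have := (tendsto_const_nhds (x := (1:ℝ)) (f := atTop (α := ℕ))).sub hsq
    simpa using this
  exact (tendsto_add_atTop_iff_nat 1).mp this
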